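/- Let b ∈ (1,∞), β ≥ 0, α = 1/b, and α₂ > -1. Then there exists a constant C = C(α,α₂,β) such that for all q ∈ (1,∞): inf_{p ∈ (1,b), 1/p - 1/q < α} (b-p)^{-β}·[α - (1/p - 1/q)]^{-(α₂+1)} ≤ C·q^{β + α₂ + 1}. -/

import Mathlib

open Real Set

/-- For `b ∈ (1,∞)`, `β ≥ 0`, `α = 1/b` and `α₂ > -1`, the infimum over `p ∈ (1,b)` with
`1/p - 1/q < α` of `(b-p)^{-β}·(α-(1/p-1/q))^{-(α₂+1)}` is at most `C·q^{β+α₂+1}`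
for all `q ∈ (1,∞)`. -/
theorem inf_weight_bound_alpha_eq_inv_b (b β α₂ : ℝ) (hb : 1 < b) (hβ : 0 ≤ β)
    (hα₂ : -1 < α₂) :
    ∃ C : ℝ, 0 < C ∧ ∀ q : ℝ, 1 < q →
      sInf {r : ℝ | ∃ p ∈ Ioo 1 b, 1/p - 1/q < 1/b ∧
          r = (b - p) ^ (-β) / (1/b - (1/p - 1/q)) ^ (α₂ + 1)}
        ≤ C * q ^ (β + α₂ + 1) := by
  have hb0 : (0:ℝ) < b := by linarith
  have hbinv : 1/b < 1 := by
    rw [div_lt_one hb0]; linarith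
  set c : ℝ := min (1/2) ((1 - 1/b)/2) with hc_def
  have hc0 : 0 < c := by
    apply lt_min <;> linarith
  have hc1 : c ≤ (1 - 1/b)/2 := min_le_right _ _
  have hbc0 : 0 < b * c := mul_pos hb0 hc0
  refine ⟨(b*c) ^ (-β) * 2 ^ (α₂+1), by positivity, ?_⟩
  intro q hq
  have hq0 : (0:ℝ) < q := by linarith
  set ε : ℝ := min (1/(2*q)) ((1 - 1/b)/2) with hε_def
  have hε0 : 0 < ε := by
    apply lt_min
    · positivity
    · linarith
  have hε1 : ε ≤ 1/(2*q) := min_le_left _ _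
  have hε2 : ε ≤ (1 - 1/b)/2 := min_le_right _ _
  have hcε : c/q ≤ ε := by
    rcases le_total (1/(2*q)) ((1 - 1/b)/2) with h | h
    · have : ε = 1/(2*q) := min_eq_left h
      rw [this]
      have : c ≤ 1/2 := min_le_left _ _
      rw [div_le_div_iff₀ hq0 (by positivity)]
      calc c * (2*q) ≤ (1/2) * (2*q) := by nlinarith
        _ = 1 * q := by ring
    · have : ε = (1 - 1/b)/2 := min_eq_right h
      rw [this]
      calc c/q ≤ c/1 := by
            apply div_le_div_of_nonneg_left hc0.le one_pos; linarith
        _ = c := div_one c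
        _ ≤ (1 - 1/b)/2 := hc1
  have hden0 : (0:ℝ) < 1/b + ε := by positivity
  have hden1 : 1/b + ε < 1 := by
    have : ε < 1 - 1/b := by
      have h : (1 - 1/b)/2 < 1 - 1/b := by linarith
      linarith [hε2]
    linarith
  set p : ℝ := (1/b + ε)⁻¹ with hp_def
  have hpinv : 1/p = 1/b + ε := by
    rw [hp_def, one_div, inv_inv]
  have hp0 : 0 < p := by rw [hp_def]; positivity
  have hp1 : 1 < p := by
    rw [hp_def]
    exact one_lt_inv_iff₀.mpr ⟨hden0, hden1⟩
  have hpb : p < b := by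
    rw [hp_def]
    calc (1/b + ε)⁻¹ < (1/b)⁻¹ := by
          apply inv_strictAnti₀ (by positivity) (by linarith)
      _ = b := by rw [one_div, inv_inv]
  have hεq : ε < 1/q := by
    have : 1/(2*q) < 1/q := by
      rw [div_lt_div_iff₀ (by positivity) hq0]; nlinarith
    linarith
  have hlt : 1/p - 1/q < 1/b := by rw [hpinv]; linarith
  have hdenom_eq : 1/b - (1/p - 1/q) = 1/q - ε := by rw [hpinv]; ring
  have hqε0 : 0 < 1/q - ε := by linarith
  -- b - p ≥ b * ε
  have hbp_eq : b - p = b * ε / (1/b + ε) := by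
    rw [hp_def]
    field_simp
    ring
  have hbp_ge : b * c / q ≤ b - p := by
    rw [hbp_eq]
    have h1 : b * ε ≤ b * ε / (1/b + ε) := by
      rw [le_div_iff₀ hden0]
      nlinarith [mul_pos hb0 hε0]
    have h2 : b * c / q ≤ b * ε := by
      have : b * (c/q) ≤ b * ε := by
        exact mul_le_mul_of_nonneg_left hcε hb0.le
      calc b * c / q = b * (c/q) := by ring
        _ ≤ b * ε := this
    linarith
  have hbp0 : 0 < b - p := by linarith
  have hbcq0 : 0 < b * c / q := by positivity
  -- membership value
  have hmem : (b - p) ^ (-β) / (1/q - ε) ^ (α₂ + 1) ∈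
      {r : ℝ | ∃ p ∈ Ioo 1 b, 1/p - 1/q < 1/b ∧
          r = (b - p) ^ (-β) / (1/b - (1/p - 1/q)) ^ (α₂ + 1)} := by
    exact ⟨p, ⟨hp1, hpb⟩, hlt, by rw [hdenom_eq]⟩
  have hbdd : BddBelow {r : ℝ | ∃ p ∈ Ioo 1 b, 1/p - 1/q < 1/b ∧
      r = (b - p) ^ (-β) / (1/b - (1/p - 1/q)) ^ (α₂ + 1)} := by
    refine ⟨0, ?_⟩
    rintro r ⟨p', ⟨hp'1, hp'b⟩, hlt', rfl⟩
    have h1 : 0 < b - p' := by linarith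
    have h2 : 0 < 1/b - (1/p' - 1/q) := by linarith
    positivity
  refine le_trans (csInf_le hbdd hmem) ?_
  -- now estimate
  have hA : (b - p) ^ (-β) ≤ (b*c/q) ^ (-β) :=
    rpow_le_rpow_of_nonpos hbcq0 hbp_ge (neg_nonpos.mpr hβ)
  have hB : (1/(2*q)) ^ (α₂+1) ≤ (1/q - ε) ^ (α₂+1) := by
    apply rpow_le_rpow (by positivity) _ (by linarith)
    have : 1/q - 1/(2*q) = 1/(2*q) := by field_simp; ring
    linarith
  have hB0 : (0:ℝ) < (1/(2*q)) ^ (α₂+1) := rpow_pos_of_pos (by positivity) _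
  have hstep : (b - p) ^ (-β) / (1/q - ε) ^ (α₂ + 1)
      ≤ (b*c/q) ^ (-β) / (1/(2*q)) ^ (α₂+1) := by
    apply div_le_div₀ (rpow_pos_of_pos hbcq0 _).le hA hB0 hB
  refine le_trans hstep (le_of_eq ?_)
  rw [div_rpow (le_of_lt hbc0) hq0.le]
  rw [show (1/(2*q)) = (2*q)⁻¹ by rw [one_div]]
  rw [inv_rpow (by positivity : (0:ℝ) ≤ 2*q)]
  rw [mul_rpow (by norm_num : (0:ℝ) ≤ 2) hq0.le]
  rw [rpow_neg hq0.le]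
  rw [show β + α₂ + 1 = β + (α₂ + 1) by ring, rpow_add hq0]
  simp only [div_eq_mul_inv, inv_inv]
  ring_nf
  rw [rpow_add hq0, rpow_add hq0, rpow_one]
  ring
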